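/- arXiv:2510.07851 — 2 statements merged into one kernel-verified Lean document; each statement's English description precedes it below -/
import Mathlib

section
/- Complete reduction ⇛ satisfies the diamond property: if M ⇛ N and M ⇛ P, then there exists a term Q such that N ⇛ Q and P ⇛ Q. -/
variable {Loc Ch : Type}

/-- FMC terms: variable, push `[N]a.M`, pop `a<x>.M` (de Bruijn binder),
choice `i`, case `M ; i -> N`, and loop `M^i`. -/
inductive Tm (Loc Ch : Type) : Type where
  | var : ℕ → Tm Loc Ch
  | push : Tm Loc Ch → Loc → Tm Loc Ch → Tm Loc Ch
  | pop : Loc → Tm Loc Ch → Tm Loc Ch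
  | choice : Ch → Tm Loc Ch
  | caseOf : Tm Loc Ch → Ch → Tm Loc Ch → Tm Loc Ch
  | loop : Tm Loc Ch → Ch → Tm Loc Ch

namespace Tm

/-- Shift the free de Bruijn indices `≥ d` up by one. -/
def lift : Tm Loc Ch → ℕ → Tm Loc Ch
  | var n, d => if n < d then var n else var (n + 1)
  | push N a M, d => push (N.lift d) a (M.lift d)
  | pop a M, d => pop a (M.lift (d + 1))
  | choice i, _ => choice i
  | caseOf M i N, d => caseOf (M.lift d) i (N.lift d)
  | loop M i, d => loop (M.lift d) i

/-- Capture-avoiding substitution `{N/k}M` for the de Bruijn index `k`. -/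
def subst : Tm Loc Ch → ℕ → Tm Loc Ch → Tm Loc Ch
  | var n, k, N => if n = k then N else if n < k then var n else var (n - 1)
  | push P a M, k, N => push (P.subst k N) a (M.subst k N)
  | pop a M, k, N => pop a (M.subst (k + 1) (N.lift 0))
  | choice i, _, _ => choice i
  | caseOf M i P, k, N => caseOf (M.subst k N) i (P.subst k N)
  | loop M i, k, N => loop (M.subst k N) i

end Tm

/-- Affine reduction: the contextual closure of the rules passage, select,
reject, prefix(pop), prefix(push), associate. -/
inductive AffStep : Tm Loc Ch → Tm Loc Ch → Prop where
  | passage (N : Tm Loc Ch) (a b : Loc) (M : Tm Loc Ch) (h : a ≠ b) :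
      AffStep (.push N b (.pop a M)) (.pop a (.push (N.lift 0) b M))
  | select (i : Ch) (M : Tm Loc Ch) :
      AffStep (.caseOf (.choice i) i M) M
  | reject (i j : Ch) (M : Tm Loc Ch) (h : i ≠ j) :
      AffStep (.caseOf (.choice i) j M) (.choice i)
  | prefixPop (a : Loc) (N : Tm Loc Ch) (i : Ch) (M : Tm Loc Ch) :
      AffStep (.caseOf (.pop a N) i M) (.pop a (.caseOf N i (M.lift 0)))
  | prefixPush (P : Tm Loc Ch) (a : Loc) (N : Tm Loc Ch) (i : Ch) (M : Tm Loc Ch) :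
      AffStep (.caseOf (.push P a N) i M) (.push P a (.caseOf N i M))
  | assoc (P : Tm Loc Ch) (i : Ch) (N M : Tm Loc Ch) :
      AffStep (.caseOf (.caseOf P i N) i M) (.caseOf P i (.caseOf N i M))
  | push_left (N N' : Tm Loc Ch) (a : Loc) (M : Tm Loc Ch) :
      AffStep N N' → AffStep (.push N a M) (.push N' a M)
  | push_right (N : Tm Loc Ch) (a : Loc) (M M' : Tm Loc Ch) :
      AffStep M M' → AffStep (.push N a M) (.push N a M')
  | pop_body (a : Loc) (M M' : Tm Loc Ch) :
      AffStep M M' → AffStep (.pop a M) (.pop a M')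
  | case_left (M M' : Tm Loc Ch) (i : Ch) (N : Tm Loc Ch) :
      AffStep M M' → AffStep (.caseOf M i N) (.caseOf M' i N)
  | case_right (M : Tm Loc Ch) (i : Ch) (N N' : Tm Loc Ch) :
      AffStep N N' → AffStep (.caseOf M i N) (.caseOf M i N')
  | loop_body (M M' : Tm Loc Ch) (i : Ch) :
      AffStep M M' → AffStep (.loop M i) (.loop M' i)

/-- Parallel duplicating reduction `M ⇒_dup N`: `N` is the marked reduct of
`M` for some marking of beta- and unroll-redexes. -/
inductive Par : Tm Loc Ch → Tm Loc Ch → Prop where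
  | var (n : ℕ) : Par (.var n) (.var n)
  | choice (i : Ch) : Par (.choice i) (.choice i)
  | push (N N' : Tm Loc Ch) (a : Loc) (M M' : Tm Loc Ch) :
      Par N N' → Par M M' → Par (.push N a M) (.push N' a M')
  | pop (a : Loc) (M M' : Tm Loc Ch) :
      Par M M' → Par (.pop a M) (.pop a M')
  | caseOf (M M' : Tm Loc Ch) (i : Ch) (N N' : Tm Loc Ch) :
      Par M M' → Par N N' → Par (.caseOf M i N) (.caseOf M' i N')
  | loop (M M' : Tm Loc Ch) (i : Ch) :
      Par M M' → Par (.loop M i) (.loop M' i)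
  | beta (N N' : Tm Loc Ch) (a : Loc) (M M' : Tm Loc Ch) :
      Par N N' → Par M M' → Par (.push N a (.pop a M)) (M'.subst 0 N')
  | unroll (M M' : Tm Loc Ch) (i : Ch) :
      Par M M' → Par (.loop M i) (.caseOf M' i (.loop M' i))

/-- `P` is an affine normal form of `M`. -/
def AffNF (M P : Tm Loc Ch) : Prop :=
  Relation.ReflTransGen AffStep M P ∧ ∀ Q, ¬ AffStep P Q

/-- Complete reduction `M ⇛ N`: a parallel duplicating step followed by
affine normalization. -/
def Comp (M N : Tm Loc Ch) : Prop :=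
  ∃ P, Par M P ∧ AffNF P N

namespace Tm

theorem lift_lift (M : Tm Loc Ch) : ∀ i j, i ≤ j →
    (M.lift j).lift i = (M.lift i).lift (j+1) := by
  induction M with
  | var n => intro i j h; simp only [subst, lift]; split_ifs <;> (try simp only [subst, lift]) <;> (try split_ifs) <;>
        first | rfl | (exfalso; omega) | (simp only [Tm.var.injEq]; omega) | (rw [subst_lift])
  | push N a M ihN ihM => intro i j h; simp [lift, ihN i j h, ihM i j h]
  | pop a M ih => intro i j h; simp [lift, ih (i+1) (j+1) (by omega)]
  | choice c => intro i j h; simp [lift]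
  | caseOf M c N ihM ihN => intro i j h; simp [lift, ihM i j h, ihN i j h]
  | loop M c ih => intro i j h; simp [lift, ih i j h]

theorem lift_subst_le (M : Tm Loc Ch) : ∀ (N : Tm Loc Ch) d k, d ≤ k →
    (M.subst k N).lift d = (M.lift d).subst (k+1) (N.lift d) := by
  induction M with
  | var n => intro N d k h; simp only [subst, lift]; split_ifs <;> (try simp only [subst, lift]) <;> (try split_ifs) <;>
        first | rfl | (exfalso; omega) | (simp only [Tm.var.injEq]; omega) | (rw [subst_lift])
  | push P a M ihP ihM => intro N d k h; simp [lift, subst, ihP N d k h, ihM N d k h]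
  | pop a M ih =>
      intro N d k h
      simp only [lift, subst]
      rw [ih (N.lift 0) (d+1) (k+1) (by omega), lift_lift N 0 d (by omega)]
  | choice c => intro N d k h; simp [lift, subst]
  | caseOf M c P ihM ihP => intro N d k h; simp [lift, subst, ihM N d k h, ihP N d k h]
  | loop M c ih => intro N d k h; simp [lift, subst, ih N d k h]

theorem lift_subst_ge (M : Tm Loc Ch) : ∀ (N : Tm Loc Ch) d k, k ≤ d →
    (M.subst k N).lift d = (M.lift (d+1)).subst k (N.lift d) := by
  induction M with
  | var n => intro N d k h; simp only [subst, lift]; split_ifs <;> (try simp only [subst, lift]) <;> (try split_ifs) <;>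
        first | rfl | (exfalso; omega) | (simp only [Tm.var.injEq]; omega) | (rw [subst_lift])
  | push P a M ihP ihM => intro N d k h; simp [lift, subst, ihP N d k h, ihM N d k h]
  | pop a M ih =>
      intro N d k h
      simp only [lift, subst]
      rw [ih (N.lift 0) (d+1) (k+1) (by omega), lift_lift N 0 d (by omega)]
  | choice c => intro N d k h; simp [lift, subst]
  | caseOf M c P ihM ihP => intro N d k h; simp [lift, subst, ihM N d k h, ihP N d k h]
  | loop M c ih => intro N d k h; simp [lift, subst, ih N d k h]

theorem subst_lift (M : Tm Loc Ch) : ∀ (N : Tm Loc Ch) k, (M.lift k).subst k N = M := by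
  induction M with
  | var n => intro N k; simp only [subst, lift]; split_ifs <;> (try simp only [subst, lift]) <;> (try split_ifs) <;>
        first | rfl | (exfalso; omega) | (simp only [Tm.var.injEq]; omega) | (rw [subst_lift])
  | push P a M ihP ihM => intro N k; simp [lift, subst, ihP, ihM]
  | pop a M ih => intro N k; simp [lift, subst, ih]
  | choice c => intro N k; simp [lift, subst]
  | caseOf M c P ihM ihP => intro N k; simp [lift, subst, ihM, ihP]
  | loop M c ih => intro N k; simp [lift, subst, ih]

theorem subst_subst (M : Tm Loc Ch) : ∀ (N P : Tm Loc Ch) j k, j ≤ k →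
    (M.subst j N).subst k P = (M.subst (k+1) (P.lift j)).subst j (N.subst k P) := by
  induction M with
  | var n =>
      intro N P j k h
      simp only [subst, lift]; split_ifs <;> (try simp only [subst, lift]) <;> (try split_ifs) <;>
        first | rfl | (exfalso; omega) | (simp only [Tm.var.injEq]; omega) | (rw [subst_lift])
  | push Q a M ihQ ihM => intro N P j k h; simp [subst, ihQ N P j k h, ihM N P j k h]
  | pop a M ih =>
      intro N P j k h
      simp only [subst]
      rw [ih (N.lift 0) (P.lift 0) (j+1) (k+1) (by omega), lift_lift P 0 j (by omega),
        lift_subst_le N P 0 k (by omega)]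
  | choice c => intro N P j k h; simp [subst]
  | caseOf M c Q ihM ihQ => intro N P j k h; simp [subst, ihM N P j k h, ihQ N P j k h]
  | loop M c ih => intro N P j k h; simp [subst, ih N P j k h]

end Tm
open Tm

/-- Reflexive-transitive closure of affine reduction. -/
abbrev AStar (M N : Tm Loc Ch) : Prop := Relation.ReflTransGen AffStep M N

theorem AStar.push_left {N N' : Tm Loc Ch} (a : Loc) (M : Tm Loc Ch) (h : AStar N N') :
    AStar (Tm.push N a M) (Tm.push N' a M) :=
  Relation.ReflTransGen.lift (fun X => Tm.push X a M) (fun _ _ s => AffStep.push_left _ _ _ _ s) _ _ h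

theorem AStar.push_right {M M' : Tm Loc Ch} (N : Tm Loc Ch) (a : Loc) (h : AStar M M') :
    AStar (Tm.push N a M) (Tm.push N a M') :=
  Relation.ReflTransGen.lift (fun X => Tm.push N a X) (fun _ _ s => AffStep.push_right _ _ _ _ s) _ _ h

theorem AStar.pop_body {M M' : Tm Loc Ch} (a : Loc) (h : AStar M M') :
    AStar (Tm.pop a M) (Tm.pop a M') :=
  Relation.ReflTransGen.lift (fun X => Tm.pop a X) (fun _ _ s => AffStep.pop_body _ _ _ s) _ _ h

theorem AStar.case_left {M M' : Tm Loc Ch} (i : Ch) (N : Tm Loc Ch) (h : AStar M M') :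
    AStar (Tm.caseOf M i N) (Tm.caseOf M' i N) :=
  Relation.ReflTransGen.lift (fun X => Tm.caseOf X i N) (fun _ _ s => AffStep.case_left _ _ _ _ s) _ _ h

theorem AStar.case_right {N N' : Tm Loc Ch} (M : Tm Loc Ch) (i : Ch) (h : AStar N N') :
    AStar (Tm.caseOf M i N) (Tm.caseOf M i N') :=
  Relation.ReflTransGen.lift (fun X => Tm.caseOf M i X) (fun _ _ s => AffStep.case_right _ _ _ _ s) _ _ h

theorem AStar.loop_body {M M' : Tm Loc Ch} (i : Ch) (h : AStar M M') :
    AStar (Tm.loop M i) (Tm.loop M' i) :=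
  Relation.ReflTransGen.lift (fun X => Tm.loop X i) (fun _ _ s => AffStep.loop_body _ _ _ s) _ _ h

/-- Affine steps are preserved by lifting. -/
theorem AffStep.lift {M M' : Tm Loc Ch} (h : AffStep M M') :
    ∀ d, AffStep (M.lift d) (M'.lift d) := by
  induction h with
  | passage N a b M hab =>
      intro d
      have : ((N.lift 0).lift (d+1) : Tm Loc Ch) = (N.lift d).lift 0 :=
        (lift_lift N 0 d (Nat.zero_le d)).symm
      simp only [Tm.lift]
      rw [this]
      exact AffStep.passage _ _ _ _ hab
  | select i M => intro d; exact AffStep.select _ _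
  | reject i j M hij => intro d; exact AffStep.reject _ _ _ hij
  | prefixPop a N i M =>
      intro d
      have : ((M.lift 0).lift (d+1) : Tm Loc Ch) = (M.lift d).lift 0 :=
        (lift_lift M 0 d (Nat.zero_le d)).symm
      simp only [Tm.lift]
      rw [this]
      exact AffStep.prefixPop _ _ _ _
  | prefixPush P a N i M => intro d; exact AffStep.prefixPush _ _ _ _ _
  | assoc P i N M => intro d; exact AffStep.assoc _ _ _ _
  | push_left N N' a M _ ih => intro d; exact AffStep.push_left _ _ _ _ (ih d)
  | push_right N a M M' _ ih => intro d; exact AffStep.push_right _ _ _ _ (ih d)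
  | pop_body a M M' _ ih => intro d; exact AffStep.pop_body _ _ _ (ih (d+1))
  | case_left M M' i N _ ih => intro d; exact AffStep.case_left _ _ _ _ (ih d)
  | case_right M i N N' _ ih => intro d; exact AffStep.case_right _ _ _ _ (ih d)
  | loop_body M M' i _ ih => intro d; exact AffStep.loop_body _ _ _ (ih d)

theorem AStar.lift {M M' : Tm Loc Ch} (h : AStar M M') (d : ℕ) :
    AStar (M.lift d) (M'.lift d) :=
  Relation.ReflTransGen.lift (fun X => Tm.lift X d) (fun _ _ s => AffStep.lift s d) _ _ h

/-- Affine steps in the body are preserved under substitution. -/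
theorem AffStep.subst_body {M M' : Tm Loc Ch} (h : AffStep M M') :
    ∀ (k : ℕ) (N : Tm Loc Ch), AffStep (M.subst k N) (M'.subst k N) := by
  induction h with
  | passage P a b M hab =>
      intro k N
      simp only [Tm.subst]
      rw [show ((P.lift 0).subst (k+1) (N.lift 0) : Tm Loc Ch) = (P.subst k N).lift 0 from
        (lift_subst_le P N 0 k (Nat.zero_le k)).symm]
      exact AffStep.passage _ _ _ _ hab
  | select i M => intro k N; exact AffStep.select _ _
  | reject i j M hij => intro k N; exact AffStep.reject _ _ _ hij
  | prefixPop a P i M =>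
      intro k N
      simp only [Tm.subst]
      rw [show ((M.lift 0).subst (k+1) (N.lift 0) : Tm Loc Ch) = (M.subst k N).lift 0 from
        (lift_subst_le M N 0 k (Nat.zero_le k)).symm]
      exact AffStep.prefixPop _ _ _ _
  | prefixPush P a Q i M => intro k N; exact AffStep.prefixPush _ _ _ _ _
  | assoc P i Q M => intro k N; exact AffStep.assoc _ _ _ _
  | push_left P P' a M _ ih => intro k N; exact AffStep.push_left _ _ _ _ (ih k N)
  | push_right P a M M' _ ih => intro k N; exact AffStep.push_right _ _ _ _ (ih k N)
  | pop_body a M M' _ ih => intro k N; exact AffStep.pop_body _ _ _ (ih (k+1) (N.lift 0))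
  | case_left M M' i P _ ih => intro k N; exact AffStep.case_left _ _ _ _ (ih k N)
  | case_right M i P P' _ ih => intro k N; exact AffStep.case_right _ _ _ _ (ih k N)
  | loop_body M M' i _ ih => intro k N; exact AffStep.loop_body _ _ _ (ih k N)

theorem AStar.subst_body {M M' : Tm Loc Ch} (h : AStar M M') (k : ℕ) (N : Tm Loc Ch) :
    AStar (M.subst k N) (M'.subst k N) :=
  Relation.ReflTransGen.lift (fun X => Tm.subst X k N) (fun _ _ s => AffStep.subst_body s k N) _ _ h

/-- Affine steps in the substituted argument give multi-steps. -/
theorem AStar.subst_arg (M : Tm Loc Ch) : ∀ (k : ℕ) {N N' : Tm Loc Ch}, AStar N N' →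
    AStar (M.subst k N) (M.subst k N') := by
  induction M with
  | var n =>
      intro k N N' h
      simp only [Tm.subst]
      split_ifs with h1
      · exact h
      · exact Relation.ReflTransGen.refl
      · exact Relation.ReflTransGen.refl
  | push P a M ihP ihM =>
      intro k N N' h
      exact Relation.ReflTransGen.trans
        (AStar.push_left _ _ (ihP k h)) (AStar.push_right _ _ (ihM k h))
  | pop a M ih =>
      intro k N N' h
      exact AStar.pop_body _ (ih (k+1) (h.lift 0))
  | choice c => intro k N N' h; exact Relation.ReflTransGen.refl
  | caseOf M c P ihM ihP =>
      intro k N N' h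
      exact Relation.ReflTransGen.trans
        (AStar.case_left _ _ (ihM k h)) (AStar.case_right _ _ (ihP k h))
  | loop M c ih => intro k N N' h; exact AStar.loop_body _ (ih k h)

namespace Tm

/-- A termination measure for affine reduction. -/
def wt : Tm Loc Ch → ℕ
  | var _ => 1
  | choice _ => 1
  | push N _ M => wt N + 2 * wt M
  | pop _ M => wt M + 1
  | caseOf M _ N => wt M * (wt N + 1)
  | loop M _ => wt M + 1

theorem wt_pos (M : Tm Loc Ch) : 1 ≤ wt M := by
  induction M with
  | var n => simp [wt]
  | push N a M ihN ihM => simp only [wt]; omega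
  | pop a M ih => simp only [wt]; omega
  | choice c => simp [wt]
  | caseOf M c N ihM ihN => simp only [wt]; nlinarith
  | loop M c ih => simp only [wt]; omega

theorem wt_lift (M : Tm Loc Ch) : ∀ d, wt (M.lift d) = wt M := by
  induction M with
  | var n => intro d; simp only [lift]; split_ifs <;> rfl
  | push N a M ihN ihM => intro d; simp [lift, wt, ihN, ihM]
  | pop a M ih => intro d; simp [lift, wt, ih]
  | choice c => intro d; simp [lift]
  | caseOf M c N ihM ihN => intro d; simp [lift, wt, ihM, ihN]
  | loop M c ih => intro d; simp [lift, wt, ih]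

end Tm

theorem AffStep.wt_lt {M M' : Tm Loc Ch} (h : AffStep M M') : Tm.wt M' < Tm.wt M := by
  induction h with
  | passage N a b M hab => simp only [Tm.wt, Tm.wt_lift]; omega
  | select i M => simp only [Tm.wt]; have := Tm.wt_pos M; omega
  | reject i j M hij => simp only [Tm.wt]; have := Tm.wt_pos M; omega
  | prefixPop a N i M =>
      simp only [Tm.wt, Tm.wt_lift]
      have h1 := Tm.wt_pos N; have h2 := Tm.wt_pos M; nlinarith
  | prefixPush P a N i M =>
      simp only [Tm.wt]
      have h1 := Tm.wt_pos P; have h2 := Tm.wt_pos N; have h3 := Tm.wt_pos M; nlinarith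
  | assoc P i N M =>
      simp only [Tm.wt]
      have h1 := Tm.wt_pos P; have h2 := Tm.wt_pos N; have h3 := Tm.wt_pos M; nlinarith
  | push_left N N' a M _ ih => simp only [Tm.wt]; omega
  | push_right N a M M' _ ih => simp only [Tm.wt]; omega
  | pop_body a M M' _ ih => simp only [Tm.wt]; omega
  | case_left M M' i N _ ih =>
      simp only [Tm.wt]
      have := Tm.wt_pos N
      exact Nat.mul_lt_mul_of_lt_of_le ih (le_refl _) (by omega)
  | case_right M i N N' _ ih =>
      simp only [Tm.wt]
      have := Tm.wt_pos M
      exact Nat.mul_lt_mul_of_le_of_lt (le_refl _) (by omega) (by omega)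
  | loop_body M M' i _ ih => simp only [Tm.wt]; omega

theorem AStar.wt_le {M M' : Tm Loc Ch} (h : AStar M M') : Tm.wt M' ≤ Tm.wt M := by
  induction h with
  | refl => exact le_refl _
  | tail _ s ih => exact le_trans (le_of_lt s.wt_lt) ih
section LocalConfluence

open Relation.ReflTransGen (single refl head tail)

theorem conf_passage {N : Tm Loc Ch} {a b : Loc} {M P : Tm Loc Ch} (hab : a ≠ b)
    (h : AffStep (Tm.push N b (Tm.pop a M)) P) :
    ∃ Q, AStar (Tm.pop a (Tm.push (N.lift 0) b M)) Q ∧ AStar P Q := by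
  cases h with
  | passage _ _ _ _ _ => exact ⟨_, refl, refl⟩
  | push_left _ N' _ _ hN =>
      exact ⟨Tm.pop a (Tm.push (N'.lift 0) b M),
        single (AffStep.pop_body _ _ _ (AffStep.push_left _ _ _ _ (hN.lift 0))),
        single (AffStep.passage _ _ _ _ hab)⟩
  | push_right _ _ _ M' hM =>
      cases hM with
      | pop_body _ _ M' hM =>
          exact ⟨Tm.pop a (Tm.push (N.lift 0) b M'),
            single (AffStep.pop_body _ _ _ (AffStep.push_right _ _ _ _ hM)),
            single (AffStep.passage _ _ _ _ hab)⟩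

theorem conf_select {i : Ch} {M P : Tm Loc Ch}
    (h : AffStep (Tm.caseOf (Tm.choice i) i M) P) :
    ∃ Q, AStar M Q ∧ AStar P Q := by
  cases h with
  | select => exact ⟨M, refl, refl⟩
  | reject _ _ _ hij => exact absurd rfl hij
  | case_left _ _ _ _ hc => cases hc
  | case_right _ _ _ M' hM => exact ⟨M', single hM, single (AffStep.select _ _)⟩

theorem conf_reject {i j : Ch} {M P : Tm Loc Ch} (hij : i ≠ j)
    (h : AffStep (Tm.caseOf (Tm.choice i) j M) P) :
    ∃ Q, AStar (Tm.choice i : Tm Loc Ch) Q ∧ AStar P Q := by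
  cases h with
  | select => exact absurd rfl hij
  | reject => exact ⟨_, refl, refl⟩
  | case_left _ _ _ _ hc => cases hc
  | case_right _ _ _ M' hM => exact ⟨_, refl, single (AffStep.reject _ _ _ hij)⟩

theorem conf_prefixPop {a : Loc} {N : Tm Loc Ch} {i : Ch} {M P : Tm Loc Ch}
    (h : AffStep (Tm.caseOf (Tm.pop a N) i M) P) :
    ∃ Q, AStar (Tm.pop a (Tm.caseOf N i (M.lift 0))) Q ∧ AStar P Q := by
  cases h with
  | prefixPop => exact ⟨_, refl, refl⟩
  | case_left _ _ _ _ hc =>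
      cases hc with
      | pop_body _ _ N' hN =>
          exact ⟨Tm.pop a (Tm.caseOf N' i (M.lift 0)),
            single (AffStep.pop_body _ _ _ (AffStep.case_left _ _ _ _ hN)),
            single (AffStep.prefixPop _ _ _ _)⟩
  | case_right _ _ _ M' hM =>
      exact ⟨Tm.pop a (Tm.caseOf N i (M'.lift 0)),
        single (AffStep.pop_body _ _ _ (AffStep.case_right _ _ _ _ (hM.lift 0))),
        single (AffStep.prefixPop _ _ _ _)⟩

theorem conf_prefixPush {P : Tm Loc Ch} {a : Loc} {N : Tm Loc Ch} {i : Ch} {M R : Tm Loc Ch}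
    (h : AffStep (Tm.caseOf (Tm.push P a N) i M) R) :
    ∃ Q, AStar (Tm.push P a (Tm.caseOf N i M)) Q ∧ AStar R Q := by
  cases h with
  | prefixPush => exact ⟨_, refl, refl⟩
  | case_left _ _ _ _ hc =>
      cases hc with
      | passage _ c _ N0 hca =>
          refine ⟨Tm.pop c (Tm.push (P.lift 0) a (Tm.caseOf N0 i (M.lift 0))), ?_, ?_⟩
          · exact head (AffStep.push_right _ _ _ _ (AffStep.prefixPop _ _ _ _))
              (single (AffStep.passage _ _ _ _ hca))
          · exact head (AffStep.prefixPop _ _ _ _)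
              (single (AffStep.pop_body _ _ _ (AffStep.prefixPush _ _ _ _ _)))
      | push_left _ P' _ _ hP =>
          exact ⟨Tm.push P' a (Tm.caseOf N i M),
            single (AffStep.push_left _ _ _ _ hP),
            single (AffStep.prefixPush _ _ _ _ _)⟩
      | push_right _ _ _ N' hN =>
          exact ⟨Tm.push P a (Tm.caseOf N' i M),
            single (AffStep.push_right _ _ _ _ (AffStep.case_left _ _ _ _ hN)),
            single (AffStep.prefixPush _ _ _ _ _)⟩
  | case_right _ _ _ M' hM =>
      exact ⟨Tm.push P a (Tm.caseOf N i M'),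
        single (AffStep.push_right _ _ _ _ (AffStep.case_right _ _ _ _ hM)),
        single (AffStep.prefixPush _ _ _ _ _)⟩

theorem conf_assoc {P : Tm Loc Ch} {i : Ch} {N M R : Tm Loc Ch}
    (h : AffStep (Tm.caseOf (Tm.caseOf P i N) i M) R) :
    ∃ Q, AStar (Tm.caseOf P i (Tm.caseOf N i M)) Q ∧ AStar R Q := by
  cases h with
  | assoc => exact ⟨_, refl, refl⟩
  | case_left _ _ _ _ hc =>
      cases hc with
      | select =>
          exact ⟨Tm.caseOf N i M, single (AffStep.select _ _), refl⟩
      | reject _ _ _ hci =>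
          exact ⟨_, single (AffStep.reject _ _ _ hci), single (AffStep.reject _ _ _ hci)⟩
      | prefixPop c P0 =>
          refine ⟨Tm.pop c (Tm.caseOf P0 i (Tm.caseOf (N.lift 0) i (M.lift 0))), ?_, ?_⟩
          · have : AffStep (Tm.caseOf (Tm.pop c P0) i (Tm.caseOf N i M))
                (Tm.pop c (Tm.caseOf P0 i ((Tm.caseOf N i M).lift 0))) :=
              AffStep.prefixPop _ _ _ _
            simpa [Tm.lift] using single this
          · exact head (AffStep.prefixPop _ _ _ _)
              (single (AffStep.pop_body _ _ _ (AffStep.assoc _ _ _ _)))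
      | prefixPush P1 c P0 =>
          refine ⟨Tm.push P1 c (Tm.caseOf P0 i (Tm.caseOf N i M)), ?_, ?_⟩
          · exact single (AffStep.prefixPush _ _ _ _ _)
          · exact head (AffStep.prefixPush _ _ _ _ _)
              (single (AffStep.push_right _ _ _ _ (AffStep.assoc _ _ _ _)))
      | assoc P1 _ P0 =>
          refine ⟨Tm.caseOf P1 i (Tm.caseOf P0 i (Tm.caseOf N i M)), ?_, ?_⟩
          · exact single (AffStep.assoc _ _ _ _)
          · exact head (AffStep.assoc _ _ _ _)
              (single (AffStep.case_right _ _ _ _ (AffStep.assoc _ _ _ _)))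
      | case_left _ P' _ _ hP =>
          exact ⟨Tm.caseOf P' i (Tm.caseOf N i M),
            single (AffStep.case_left _ _ _ _ hP), single (AffStep.assoc _ _ _ _)⟩
      | case_right _ _ _ N' hN =>
          exact ⟨Tm.caseOf P i (Tm.caseOf N' i M),
            single (AffStep.case_right _ _ _ _ (AffStep.case_left _ _ _ _ hN)),
            single (AffStep.assoc _ _ _ _)⟩
  | case_right _ _ _ M' hM =>
      exact ⟨Tm.caseOf P i (Tm.caseOf N i M'),
        single (AffStep.case_right _ _ _ _ (AffStep.case_right _ _ _ _ hM)),
        single (AffStep.assoc _ _ _ _)⟩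

theorem loc_conf {M N P : Tm Loc Ch} (h1 : AffStep M N) (h2 : AffStep M P) :
    ∃ Q, AStar N Q ∧ AStar P Q := by
  induction h1 generalizing P with
  | passage _ _ _ _ hab => exact conf_passage hab h2
  | select => exact conf_select h2
  | reject _ _ _ hij => exact conf_reject hij h2
  | prefixPop => exact conf_prefixPop h2
  | prefixPush => exact conf_prefixPush h2
  | assoc => exact conf_assoc h2
  | push_left N₀ N₁ a K hN ih =>
      cases h2 with
      | passage _ _ _ _ hab =>
          obtain ⟨Q, hq1, hq2⟩ := conf_passage hab (AffStep.push_left _ _ _ _ hN)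
          exact ⟨Q, hq2, hq1⟩
      | push_left _ N₂ _ _ hN₂ =>
          obtain ⟨N₃, s1, s2⟩ := ih hN₂
          exact ⟨Tm.push N₃ a K, AStar.push_left _ _ s1, AStar.push_left _ _ s2⟩
      | push_right _ _ _ K₁ hK =>
          exact ⟨Tm.push N₁ a K₁,
            single (AffStep.push_right _ _ _ _ hK),
            single (AffStep.push_left _ _ _ _ hN)⟩
  | push_right N₀ a K K₁ hK ih =>
      cases h2 with
      | passage _ _ _ _ hab =>
          obtain ⟨Q, hq1, hq2⟩ := conf_passage hab (AffStep.push_right _ _ _ _ hK)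
          exact ⟨Q, hq2, hq1⟩
      | push_left _ N₂ _ _ hN₂ =>
          exact ⟨Tm.push N₂ a K₁,
            single (AffStep.push_left _ _ _ _ hN₂),
            single (AffStep.push_right _ _ _ _ hK)⟩
      | push_right _ _ _ K₂ hK₂ =>
          obtain ⟨K₃, s1, s2⟩ := ih hK₂
          exact ⟨Tm.push N₀ a K₃, AStar.push_right _ _ s1, AStar.push_right _ _ s2⟩
  | pop_body a K K₁ hK ih =>
      cases h2 with
      | pop_body _ _ K₂ hK₂ =>
          obtain ⟨K₃, s1, s2⟩ := ih hK₂
          exact ⟨Tm.pop a K₃, AStar.pop_body _ s1, AStar.pop_body _ s2⟩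
  | case_left K K₁ i R hK ih =>
      cases h2 with
      | select => cases hK
      | reject => cases hK
      | prefixPop =>
          obtain ⟨Q, hq1, hq2⟩ := conf_prefixPop (AffStep.case_left _ _ _ _ hK)
          exact ⟨Q, hq2, hq1⟩
      | prefixPush =>
          obtain ⟨Q, hq1, hq2⟩ := conf_prefixPush (AffStep.case_left _ _ _ _ hK)
          exact ⟨Q, hq2, hq1⟩
      | assoc =>
          obtain ⟨Q, hq1, hq2⟩ := conf_assoc (AffStep.case_left _ _ _ _ hK)
          exact ⟨Q, hq2, hq1⟩
      | case_left _ K₂ _ _ hK₂ =>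
          obtain ⟨K₃, s1, s2⟩ := ih hK₂
          exact ⟨Tm.caseOf K₃ i R, AStar.case_left _ _ s1, AStar.case_left _ _ s2⟩
      | case_right _ _ _ R₁ hR =>
          exact ⟨Tm.caseOf K₁ i R₁,
            single (AffStep.case_right _ _ _ _ hR),
            single (AffStep.case_left _ _ _ _ hK)⟩
  | case_right K i R R₁ hR ih =>
      cases h2 with
      | select =>
          obtain ⟨Q, hq1, hq2⟩ := conf_select (AffStep.case_right _ _ _ _ hR)
          exact ⟨Q, hq2, hq1⟩
      | reject _ _ _ hij =>
          obtain ⟨Q, hq1, hq2⟩ := conf_reject hij (AffStep.case_right _ _ _ _ hR)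
          exact ⟨Q, hq2, hq1⟩
      | prefixPop =>
          obtain ⟨Q, hq1, hq2⟩ := conf_prefixPop (AffStep.case_right _ _ _ _ hR)
          exact ⟨Q, hq2, hq1⟩
      | prefixPush =>
          obtain ⟨Q, hq1, hq2⟩ := conf_prefixPush (AffStep.case_right _ _ _ _ hR)
          exact ⟨Q, hq2, hq1⟩
      | assoc =>
          obtain ⟨Q, hq1, hq2⟩ := conf_assoc (AffStep.case_right _ _ _ _ hR)
          exact ⟨Q, hq2, hq1⟩
      | case_left _ K₂ _ _ hK₂ =>
          exact ⟨Tm.caseOf K₂ i R₁,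
            single (AffStep.case_left _ _ _ _ hK₂),
            single (AffStep.case_right _ _ _ _ hR)⟩
      | case_right _ _ _ R₂ hR₂ =>
          obtain ⟨R₃, s1, s2⟩ := ih hR₂
          exact ⟨Tm.caseOf K i R₃, AStar.case_right _ _ s1, AStar.case_right _ _ s2⟩
  | loop_body K K₁ i hK ih =>
      cases h2 with
      | loop_body _ K₂ _ hK₂ =>
          obtain ⟨K₃, s1, s2⟩ := ih hK₂
          exact ⟨Tm.loop K₃ i, AStar.loop_body _ s1, AStar.loop_body _ s2⟩
end LocalConfluence

/-- Confluence of affine reduction (Newman's lemma, via the weight measure). -/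
theorem aff_confluent_aux :
    ∀ (n : ℕ) (M N P : Tm Loc Ch), Tm.wt M ≤ n → AStar M N → AStar M P →
      ∃ Q, AStar N Q ∧ AStar P Q := by
  intro n
  induction n with
  | zero => intro M N P hw; have := Tm.wt_pos M; omega
  | succ n ih =>
      intro M N P hw hN hP
      rcases (Relation.ReflTransGen.cases_head hN) with rfl | ⟨N₁, s1, hN₁⟩
      · exact ⟨P, hP, Relation.ReflTransGen.refl⟩
      rcases (Relation.ReflTransGen.cases_head hP) with rfl | ⟨P₁, s2, hP₁⟩
      · exact ⟨N, Relation.ReflTransGen.refl, hN⟩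
      obtain ⟨d, hd1, hd2⟩ := loc_conf s1 s2
      have hwN₁ : Tm.wt N₁ ≤ n := by have := s1.wt_lt; omega
      have hwP₁ : Tm.wt P₁ ≤ n := by have := s2.wt_lt; omega
      obtain ⟨e, he1, he2⟩ := ih N₁ N d hwN₁ hN₁ hd1
      obtain ⟨q, hq1, hq2⟩ := ih P₁ P e hwP₁ hP₁ (Relation.ReflTransGen.trans hd2 he2)
      exact ⟨q, Relation.ReflTransGen.trans he1 hq2, hq1⟩

theorem aff_confluent {M N P : Tm Loc Ch} (hN : AStar M N) (hP : AStar M P) :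
    ∃ Q, AStar N Q ∧ AStar P Q :=
  aff_confluent_aux (Tm.wt M) M N P (le_refl _) hN hP

/-- Any reduct reduces to the normal form. -/
theorem nf_reach {M N P : Tm Loc Ch} (hN : AStar M N) (hnf : ∀ Q, ¬ AffStep N Q)
    (hP : AStar M P) : AStar P N := by
  obtain ⟨Q, hq1, hq2⟩ := aff_confluent hN hP
  rcases (Relation.ReflTransGen.cases_head hq1) with rfl | ⟨R, s, _⟩
  · exact hq2
  · exact absurd s (hnf R)

/-- Every term has an affine normal form. -/
theorem nf_exists : ∀ (n : ℕ) (M : Tm Loc Ch), Tm.wt M ≤ n → ∃ N, AffNF M N := by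
  intro n
  induction n with
  | zero => intro M hw; have := Tm.wt_pos M; omega
  | succ n ih =>
      intro M hw
      by_cases h : ∀ Q, ¬ AffStep M Q
      · exact ⟨M, Relation.ReflTransGen.refl, h⟩
      · push_neg at h
        obtain ⟨M₁, s⟩ := h
        obtain ⟨N, hN1, hN2⟩ := ih M₁ (by have := s.wt_lt; omega)
        exact ⟨N, Relation.ReflTransGen.head s hN1, hN2⟩
theorem par_refl (M : Tm Loc Ch) : Par M M := by
  induction M with
  | var n => exact Par.var n
  | push N a M ihN ihM => exact Par.push _ _ _ _ _ ihN ihM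
  | pop a M ih => exact Par.pop _ _ _ ih
  | choice i => exact Par.choice i
  | caseOf M i N ihM ihN => exact Par.caseOf _ _ _ _ _ ihM ihN
  | loop M i ih => exact Par.loop _ _ _ ih

theorem Par.lift_par {M M' : Tm Loc Ch} (h : Par M M') : ∀ d, Par (M.lift d) (M'.lift d) := by
  induction h with
  | var n => intro d; exact par_refl _
  | choice i => intro d; exact par_refl _
  | push N N' a M M' _ _ ihN ihM =>
      intro d; exact Par.push _ _ _ _ _ (ihN d) (ihM d)
  | pop a M M' _ ih => intro d; exact Par.pop _ _ _ (ih (d+1))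
  | caseOf M M' i N N' _ _ ihM ihN =>
      intro d; exact Par.caseOf _ _ _ _ _ (ihM d) (ihN d)
  | loop M M' i _ ih => intro d; exact Par.loop _ _ _ (ih d)
  | beta N N' a M M' _ _ ihN ihM =>
      intro d
      have := Par.beta _ _ a _ _ (ihN d) (ihM (d+1))
      simpa [Tm.lift, Tm.lift_subst_ge M' N' d 0 (Nat.zero_le d)] using this
  | unroll M M' i _ ih =>
      intro d; exact Par.unroll _ _ _ (ih d)

theorem Par.subst_par {M M' : Tm Loc Ch} (h : Par M M') :
    ∀ (k : ℕ) {N N' : Tm Loc Ch}, Par N N' → Par (M.subst k N) (M'.subst k N') := by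
  induction h with
  | var n =>
      intro k N N' hN
      simp only [Tm.subst]
      split_ifs with h1 h2
      · exact hN
      · exact par_refl _
      · exact par_refl _
  | choice i => intro k N N' hN; exact par_refl _
  | push P P' a M M' _ _ ihP ihM =>
      intro k N N' hN; exact Par.push _ _ _ _ _ (ihP k hN) (ihM k hN)
  | pop a M M' _ ih =>
      intro k N N' hN; exact Par.pop _ _ _ (ih (k+1) (hN.lift_par 0))
  | caseOf M M' i P P' _ _ ihM ihP =>
      intro k N N' hN; exact Par.caseOf _ _ _ _ _ (ihM k hN) (ihP k hN)
  | loop M M' i _ ih => intro k N N' hN; exact Par.loop _ _ _ (ih k hN)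
  | beta P P' a M M' _ _ ihP ihM =>
      intro k N N' hN
      have := Par.beta _ (P'.subst k N') a _ (M'.subst (k+1) (N'.lift 0))
        (ihP k hN) (ihM (k+1) (hN.lift_par 0))
      simpa [Tm.subst, Tm.subst_subst M' P' N' 0 k (Nat.zero_le k)] using this
  | unroll M M' i _ ih =>
      intro k N N' hN; exact Par.unroll _ _ _ (ih k hN)

theorem par_diamond {M N P : Tm Loc Ch} (h1 : Par M N) (h2 : Par M P) :
    ∃ Q, Par N Q ∧ Par P Q := by
  induction h1 generalizing P with
  | var n => cases h2 with
      | var => exact ⟨_, par_refl _, par_refl _⟩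
  | choice i => cases h2 with
      | choice => exact ⟨_, par_refl _, par_refl _⟩
  | push A A' a B B' hA hB ihA ihB =>
      cases h2 with
      | push _ A₂ _ _ B₂ hA₂ hB₂ =>
          obtain ⟨A₃, a1, a2⟩ := ihA hA₂
          obtain ⟨B₃, b1, b2⟩ := ihB hB₂
          exact ⟨Tm.push A₃ a B₃, Par.push _ _ _ _ _ a1 b1, Par.push _ _ _ _ _ a2 b2⟩
      | beta _ A₂ _ B₀ B₂ hA₂ hB₂ =>
          -- here B = pop a B₀ and B' is a Par-reduct of it
          cases hB with
          | pop _ _ B₀' hB₀' =>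
              obtain ⟨A₃, a1, a2⟩ := ihA hA₂
              obtain ⟨Bj, b1, b2⟩ := ihB (Par.pop a _ _ hB₂)
              cases b1 with
              | pop _ _ Qb hQb1 =>
                  cases b2 with
                  | pop _ _ _ hQb2 =>
                      exact ⟨Qb.subst 0 A₃,
                        Par.beta _ _ _ _ _ a1 hQb1,
                        Par.subst_par hQb2 0 a2⟩
  | pop a B B' hB ihB =>
      cases h2 with
      | pop _ _ B₂ hB₂ =>
          obtain ⟨B₃, b1, b2⟩ := ihB hB₂
          exact ⟨Tm.pop a B₃, Par.pop _ _ _ b1, Par.pop _ _ _ b2⟩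
  | caseOf A A' i B B' hA hB ihA ihB =>
      cases h2 with
      | caseOf _ A₂ _ _ B₂ hA₂ hB₂ =>
          obtain ⟨A₃, a1, a2⟩ := ihA hA₂
          obtain ⟨B₃, b1, b2⟩ := ihB hB₂
          exact ⟨Tm.caseOf A₃ i B₃, Par.caseOf _ _ _ _ _ a1 b1, Par.caseOf _ _ _ _ _ a2 b2⟩
  | loop B B' i hB ihB =>
      cases h2 with
      | loop _ B₂ _ hB₂ =>
          obtain ⟨B₃, b1, b2⟩ := ihB hB₂
          exact ⟨Tm.loop B₃ i, Par.loop _ _ _ b1, Par.loop _ _ _ b2⟩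
      | unroll _ B₂ _ hB₂ =>
          obtain ⟨B₃, b1, b2⟩ := ihB hB₂
          exact ⟨Tm.caseOf B₃ i (Tm.loop B₃ i),
            Par.unroll _ _ _ b1,
            Par.caseOf _ _ _ _ _ b2 (Par.loop _ _ _ b2)⟩
  | beta A A' a B B' hA hB ihA ihB =>
      cases h2 with
      | push _ A₂ _ _ X hA₂ hX =>
          cases hX with
          | pop _ _ B₂ hB₂ =>
              obtain ⟨A₃, a1, a2⟩ := ihA hA₂
              obtain ⟨B₃, b1, b2⟩ := ihB hB₂
              exact ⟨B₃.subst 0 A₃,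
                Par.subst_par b1 0 a1,
                Par.beta _ _ _ _ _ a2 b2⟩
      | beta _ A₂ _ _ B₂ hA₂ hB₂ =>
          obtain ⟨A₃, a1, a2⟩ := ihA hA₂
          obtain ⟨B₃, b1, b2⟩ := ihB hB₂
          exact ⟨B₃.subst 0 A₃, Par.subst_par b1 0 a1, Par.subst_par b2 0 a2⟩
  | unroll B B' i hB ihB =>
      cases h2 with
      | loop _ B₂ _ hB₂ =>
          obtain ⟨B₃, b1, b2⟩ := ihB hB₂
          exact ⟨Tm.caseOf B₃ i (Tm.loop B₃ i),
            Par.caseOf _ _ _ _ _ b1 (Par.loop _ _ _ b1),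
            Par.unroll _ _ _ b2⟩
      | unroll _ B₂ _ hB₂ =>
          obtain ⟨B₃, b1, b2⟩ := ihB hB₂
          exact ⟨Tm.caseOf B₃ i (Tm.loop B₃ i),
            Par.caseOf _ _ _ _ _ b1 (Par.loop _ _ _ b1),
            Par.caseOf _ _ _ _ _ b2 (Par.loop _ _ _ b2)⟩
section Comm

open Relation.ReflTransGen (single refl)

/-- Commutation of a single affine step with a parallel step. -/
theorem aff_par_comm : ∀ (n : ℕ) (M M₁ Q : Tm Loc Ch), Tm.wt M ≤ n →
    AffStep M M₁ → Par M Q → ∃ M₂ Q₁, AStar M₁ M₂ ∧ AStar Q Q₁ ∧ Par M₂ Q₁ := by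
  intro n
  induction n with
  | zero => intro M M₁ Q hw; have := Tm.wt_pos M; omega
  | succ n ih =>
      intro M M₁ Q hw hs hQ
      cases hs with
      | passage N a b K hab =>
          cases hQ with
          | push _ N' _ _ X hN hX =>
              cases hX with
              | pop _ _ K' hK =>
                  exact ⟨Tm.pop a (Tm.push (N.lift 0) b K),
                    Tm.pop a (Tm.push (N'.lift 0) b K'), refl,
                    single (AffStep.passage _ _ _ _ hab),
                    Par.pop _ _ _ (Par.push _ _ _ _ _ (hN.lift_par 0) hK)⟩
          | beta _ _ _ _ _ _ _ => exact absurd rfl hab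
      | select i K =>
          cases hQ with
          | caseOf _ X _ _ K' hX hK =>
              cases hX with
              | choice => exact ⟨_, K', refl, single (AffStep.select _ _), hK⟩
      | reject i j K hij =>
          cases hQ with
          | caseOf _ X _ _ K' hX hK =>
              cases hX with
              | choice =>
                  exact ⟨Tm.choice i, Tm.choice i, refl,
                    single (AffStep.reject _ _ _ hij), par_refl _⟩
      | prefixPop a K i R =>
          cases hQ with
          | caseOf _ X _ _ R' hX hR =>
              cases hX with
              | pop _ _ K' hK =>
                  exact ⟨Tm.pop a (Tm.caseOf K i (R.lift 0)),
                    Tm.pop a (Tm.caseOf K' i (R'.lift 0)), refl,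
                    single (AffStep.prefixPop _ _ _ _),
                    Par.pop _ _ _ (Par.caseOf _ _ _ _ _ hK (hR.lift_par 0))⟩
      | prefixPush P a K i R =>
          cases hQ with
          | caseOf _ W _ _ R' hW hR =>
              cases hW with
              | push _ P' _ _ K' hP hK =>
                  exact ⟨Tm.push P a (Tm.caseOf K i R),
                    Tm.push P' a (Tm.caseOf K' i R'), refl,
                    single (AffStep.prefixPush _ _ _ _ _),
                    Par.push _ _ _ _ _ hP (Par.caseOf _ _ _ _ _ hK hR)⟩
              | beta _ P' _ K0 K0' hP hK0 =>
                  refine ⟨Tm.push P a (Tm.pop a (Tm.caseOf K0 i (R.lift 0))),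
                    Tm.caseOf (K0'.subst 0 P') i R',
                    single (AffStep.push_right _ _ _ _ (AffStep.prefixPop _ _ _ _)),
                    refl, ?_⟩
                  have := Par.beta P P' a _ (Tm.caseOf K0' i (R'.lift 0)) hP
                    (Par.caseOf _ _ _ _ _ hK0 (hR.lift_par 0))
                  simpa [Tm.subst, Tm.subst_lift] using this
      | assoc P i K R =>
          cases hQ with
          | caseOf _ X _ _ R' hX hR =>
              cases hX with
              | caseOf _ P' _ _ K' hP hK =>
                  exact ⟨Tm.caseOf P i (Tm.caseOf K i R),
                    Tm.caseOf P' i (Tm.caseOf K' i R'), refl,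
                    single (AffStep.assoc _ _ _ _),
                    Par.caseOf _ _ _ _ _ hP (Par.caseOf _ _ _ _ _ hK hR)⟩
      | push_left N N₁ a K hN =>
          cases hQ with
          | push _ N' _ _ K' hN' hK =>
              obtain ⟨N₂, N'₁, s1, s2, hp⟩ := ih N N₁ N'
                (by simp only [Tm.wt] at hw; have := Tm.wt_pos K; omega) hN hN'
              exact ⟨Tm.push N₂ a K, Tm.push N'₁ a K',
                AStar.push_left _ _ s1, AStar.push_left _ _ s2,
                Par.push _ _ _ _ _ hp hK⟩
          | beta _ N' _ K0 K0' hN' hK0 =>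
              obtain ⟨N₂, N'₁, s1, s2, hp⟩ := ih N N₁ N'
                (by simp only [Tm.wt] at hw; have := Tm.wt_pos (Tm.pop a K0); omega) hN hN'
              exact ⟨Tm.push N₂ a (Tm.pop a K0), K0'.subst 0 N'₁,
                AStar.push_left _ _ s1, AStar.subst_arg K0' 0 s2,
                Par.beta _ _ _ _ _ hp hK0⟩
      | push_right N a K K₁ hK =>
          cases hQ with
          | push _ N' _ _ K' hN' hK' =>
              obtain ⟨K₂, K'₁, s1, s2, hp⟩ := ih K K₁ K'
                (by simp only [Tm.wt] at hw; have := Tm.wt_pos N; omega) hK hK'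
              exact ⟨Tm.push N a K₂, Tm.push N' a K'₁,
                AStar.push_right _ _ s1, AStar.push_right _ _ s2,
                Par.push _ _ _ _ _ hN' hp⟩
          | beta _ N' _ K0 K0' hN' hK0 =>
              cases hK with
              | pop_body _ _ K0₁ h0 =>
                  obtain ⟨K0₂, K0'₁, s1, s2, hp⟩ := ih K0 K0₁ K0'
                    (by simp only [Tm.wt] at hw; have := Tm.wt_pos N; omega) h0 hK0
                  exact ⟨Tm.push N a (Tm.pop a K0₂), K0'₁.subst 0 N',
                    AStar.push_right _ _ (AStar.pop_body _ s1),
                    AStar.subst_body s2 0 N',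
                    Par.beta _ _ _ _ _ hN' hp⟩
      | pop_body a K K₁ hK =>
          cases hQ with
          | pop _ _ K' hK' =>
              obtain ⟨K₂, K'₁, s1, s2, hp⟩ := ih K K₁ K'
                (by simp only [Tm.wt] at hw; omega) hK hK'
              exact ⟨Tm.pop a K₂, Tm.pop a K'₁,
                AStar.pop_body _ s1, AStar.pop_body _ s2, Par.pop _ _ _ hp⟩
      | case_left K K₁ i R hK =>
          cases hQ with
          | caseOf _ K' _ _ R' hK' hR =>
              obtain ⟨K₂, K'₁, s1, s2, hp⟩ := ih K K₁ K'
                (by simp only [Tm.wt] at hw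
                    have h1 := Tm.wt_pos K; have h2 := Tm.wt_pos R; nlinarith) hK hK'
              exact ⟨Tm.caseOf K₂ i R, Tm.caseOf K'₁ i R',
                AStar.case_left _ _ s1, AStar.case_left _ _ s2,
                Par.caseOf _ _ _ _ _ hp hR⟩
      | case_right K i R R₁ hR =>
          cases hQ with
          | caseOf _ K' _ _ R' hK' hR' =>
              obtain ⟨R₂, R'₁, s1, s2, hp⟩ := ih R R₁ R'
                (by simp only [Tm.wt] at hw
                    have h1 := Tm.wt_pos K; have h2 := Tm.wt_pos R; nlinarith) hR hR'
              exact ⟨Tm.caseOf K i R₂, Tm.caseOf K' i R'₁,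
                AStar.case_right _ _ s1, AStar.case_right _ _ s2,
                Par.caseOf _ _ _ _ _ hK' hp⟩
      | loop_body K K₁ i hK =>
          cases hQ with
          | loop _ K' _ hK' =>
              obtain ⟨K₂, K'₁, s1, s2, hp⟩ := ih K K₁ K'
                (by simp only [Tm.wt] at hw; omega) hK hK'
              exact ⟨Tm.loop K₂ i, Tm.loop K'₁ i,
                AStar.loop_body _ s1, AStar.loop_body _ s2, Par.loop _ _ _ hp⟩
          | unroll _ K' _ hK' =>
              obtain ⟨K₂, K'₁, s1, s2, hp⟩ := ih K K₁ K'
                (by simp only [Tm.wt] at hw; omega) hK hK'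
              exact ⟨Tm.loop K₂ i, Tm.caseOf K'₁ i (Tm.loop K'₁ i),
                AStar.loop_body _ s1,
                Relation.ReflTransGen.trans (AStar.case_left _ _ s2)
                  (AStar.case_right _ _ (AStar.loop_body _ s2)),
                Par.unroll _ _ _ hp⟩

/-- Parallel reduction commutes with affine normalization. -/
theorem par_norm : ∀ (n : ℕ) (M Q Mn : Tm Loc Ch), Tm.wt M ≤ n → Par M Q →
    AStar M Mn → (∀ R, ¬ AffStep Mn R) → ∃ Q', AStar Q Q' ∧ Par Mn Q' := by
  intro n
  induction n with
  | zero => intro M Q Mn hw; have := Tm.wt_pos M; omega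
  | succ n ih =>
      intro M Q Mn hw hQ hMn hnf
      rcases (Relation.ReflTransGen.cases_head hMn) with rfl | ⟨M₁, s, hM₁⟩
      · exact ⟨Q, refl, hQ⟩
      obtain ⟨M₂, Q₁, s1, s2, hp⟩ := aff_par_comm (Tm.wt M) M M₁ Q (le_refl _) s hQ
      have hM₂n : AStar M₂ Mn := nf_reach hM₁ hnf s1
      have hwM₂ : Tm.wt M₂ ≤ n := by
        have h1 := s.wt_lt; have h2 := s1.wt_le; omega
      obtain ⟨Q', hq1, hq2⟩ := ih M₂ Q₁ Mn hwM₂ hp hM₂n hnf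
      exact ⟨Q', Relation.ReflTransGen.trans s2 hq1, hq2⟩

end Comm

/-- Complete reduction satisfies the diamond property. -/
theorem complete_reduction_diamond (M N P : Tm Loc Ch) (h1 : Comp M N) (h2 : Comp M P) :
    ∃ Q : Tm Loc Ch, Comp N Q ∧ Comp P Q := by
  obtain ⟨P1, hP1, hP1N, hNnf⟩ := h1
  obtain ⟨P2, hP2, hP2P, hPnf⟩ := h2
  obtain ⟨Q0, hq1, hq2⟩ := par_diamond hP1 hP2
  obtain ⟨Q1, hQ01, hNQ1⟩ := par_norm (Tm.wt P1) P1 Q0 N (le_refl _) hq1 hP1N hNnf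
  obtain ⟨Q2, hQ02, hPQ2⟩ := par_norm (Tm.wt P2) P2 Q0 P (le_refl _) hq2 hP2P hPnf
  obtain ⟨Q, hQ0Q, hQnf⟩ := nf_exists (Tm.wt Q0) Q0 (le_refl _)
  have hQ1Q : AStar Q1 Q := nf_reach hQ0Q hQnf hQ01
  have hQ2Q : AStar Q2 Q := nf_reach hQ0Q hQnf hQ02
  exact ⟨Q, ⟨Q1, hNQ1, hQ1Q, hQnf⟩, ⟨Q2, hPQ2, hQ2Q, hQnf⟩⟩
end

section
/- Machine evaluation preserves types: if ⊢ (S_A, M, K) : ε => !!t_I is a typed machine state and (S_A, M, K) makes a machine transition to (T_A, N, L), then ⊢ (T_A, N, L) : ε => !!t_I. -/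
variable {Loc Ch : Type}

variable [DecidableEq Loc]

/-- A memory: a family of stacks of terms indexed by the locations
(stacks are lists with the head as top). -/
def Mem (Loc Ch : Type) := Loc → List (Tm Loc Ch)

/-- `S.push a N` pushes `N` onto the stack at location `a`. -/
def Mem.push (S : Mem Loc Ch) (a : Loc) (N : Tm Loc Ch) : Mem Loc Ch :=
  Function.update S a (N :: S a)

/-- The empty memory. -/
def Mem.empty : Mem Loc Ch := fun _ => []

/-- A continuation stack: a stack of conditional continuations `(i -> M)`. -/
abbrev CStack (Loc Ch : Type) := List (Ch × Tm Loc Ch)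

/-- The transitions of the abstract machine on states `(S, M, K)`. -/
inductive MStep : Mem Loc Ch × Tm Loc Ch × CStack Loc Ch → Mem Loc Ch × Tm Loc Ch × CStack Loc Ch → Prop where
  | push (S : Mem Loc Ch) (N : Tm Loc Ch) (a : Loc) (M : Tm Loc Ch) (K : CStack Loc Ch) :
      MStep (S, .push N a M, K) (S.push a N, M, K)
  | pop (S : Mem Loc Ch) (a : Loc) (N M : Tm Loc Ch) (K : CStack Loc Ch) :
      MStep (S.push a N, .pop a M, K) (S, M.subst 0 N, K)
  | select (S : Mem Loc Ch) (i : Ch) (M : Tm Loc Ch) (K : CStack Loc Ch) :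
      MStep (S, .choice i, (i, M) :: K) (S, M, K)
  | reject (S : Mem Loc Ch) (i j : Ch) (M : Tm Loc Ch) (K : CStack Loc Ch) (h : i ≠ j) :
      MStep (S, .choice i, (j, M) :: K) (S, .choice i, K)
  | caseOf (S : Mem Loc Ch) (N : Tm Loc Ch) (i : Ch) (M : Tm Loc Ch) (K : CStack Loc Ch) :
      MStep (S, .caseOf N i M, K) (S, N, (i, M) :: K)
  | loop (S : Mem Loc Ch) (M : Tm Loc Ch) (i : Ch) (K : CStack Loc Ch) :
      MStep (S, .loop M i, K) (S, M, (i, .loop M i) :: K)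

/-- Types `!!s => !!t_I`: an implication from a memory type (family of stack
types indexed by locations) to a sum type (family of memory types indexed
by a set of choices, represented via `Option`). -/
inductive Ty (Loc Ch : Type) : Type where
  | arr : (Loc → List (Ty Loc Ch)) → (Ch → Option (Loc → List (Ty Loc Ch))) → Ty Loc Ch

/-- Stack types: lists of types (head = top of stack). -/
abbrev StackTy (Loc Ch : Type) := List (Ty Loc Ch)

/-- Memory types: families of stack types indexed by locations. -/
abbrev MemTy (Loc Ch : Type) := Loc → StackTy Loc Ch

/-- Sum types: families of memory types indexed by a set of choices
(`T i = some m` means `i` is in the index set with memory type `m`). -/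
abbrev SumTy (Loc Ch : Type) := Ch → Option (MemTy Loc Ch)

/-- The empty memory type `ε`. -/
def memNil : MemTy Loc Ch := fun _ => []

/-- `memCons a r s` is `a(r)·!!s`: push the type `r` on top at location `a`. -/
def memCons [DecidableEq Loc] (a : Loc) (r : Ty Loc Ch) (s : MemTy Loc Ch) : MemTy Loc Ch :=
  Function.update s a (r :: s a)

/-- Pointwise concatenation of memory types (`r` on top of `s`). -/
def memApp (r s : MemTy Loc Ch) : MemTy Loc Ch := fun a => r a ++ s a

/-- The singleton sum type `!!m.i`. -/
def sumSingle [DecidableEq Ch] (i : Ch) (m : MemTy Loc Ch) : SumTy Loc Ch :=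
  fun j => if j = i then some m else none

/-- Stack expansion of a sum type: place `s` underneath every summand. -/
def sumExpand (s : MemTy Loc Ch) (T : SumTy Loc Ch) : SumTy Loc Ch :=
  fun i => (T i).map fun m => memApp m s

/-- `sumOver S T` is the sum `!!s_I + !!t_{J∖I}`: `S` overriding `T`. -/
def sumOver (S T : SumTy Loc Ch) : SumTy Loc Ch :=
  fun i => match S i with
    | some m => some m
    | none => T i

variable [DecidableEq Loc] [DecidableEq Ch]

/-- The typing judgement `Γ ⊢ M : t` of the simply-typed FMC with control,
with de Bruijn contexts (lists of types). -/
inductive Typing : List (Ty Loc Ch) → Tm Loc Ch → Ty Loc Ch → Prop where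
  | var (Γ : List (Ty Loc Ch)) (n : ℕ) (t : Ty Loc Ch) (h : Γ[n]? = some t) :
      Typing Γ (.var n) t
  | choice (Γ : List (Ty Loc Ch)) (i : Ch) :
      Typing Γ (.choice i) (.arr memNil (sumSingle i memNil))
  | push (Γ : List (Ty Loc Ch)) (N : Tm Loc Ch) (r : Ty Loc Ch) (a : Loc)
      (M : Tm Loc Ch) (s : MemTy Loc Ch) (T : SumTy Loc Ch) :
      Typing Γ N r → Typing Γ M (.arr (memCons a r s) T) →
      Typing Γ (.push N a M) (.arr s T)
  | pop (Γ : List (Ty Loc Ch)) (r : Ty Loc Ch) (a : Loc) (M : Tm Loc Ch)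
      (s : MemTy Loc Ch) (T : SumTy Loc Ch) :
      Typing (r :: Γ) M (.arr s T) →
      Typing Γ (.pop a M) (.arr (memCons a r s) T)
  | caseOf (Γ : List (Ty Loc Ch)) (M N : Tm Loc Ch) (i : Ch)
      (r s : MemTy Loc Ch) (T : SumTy Loc Ch) :
      Typing Γ M (.arr r (Function.update T i (some s))) →
      Typing Γ N (.arr s T) →
      Typing Γ (.caseOf M i N) (.arr r T)
  | loop (Γ : List (Ty Loc Ch)) (M : Tm Loc Ch) (i : Ch)
      (s : MemTy Loc Ch) (T : SumTy Loc Ch) (h : T i = none) :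
      Typing Γ M (.arr s (Function.update T i (some s))) →
      Typing Γ (.loop M i) (.arr s T)
  | expand (Γ : List (Ty Loc Ch)) (M : Tm Loc Ch)
      (r s : MemTy Loc Ch) (T : SumTy Loc Ch) :
      Typing Γ M (.arr r T) →
      Typing Γ M (.arr (memApp r s) (sumExpand s T))
  | incl (Γ : List (Ty Loc Ch)) (M : Tm Loc Ch) (r : MemTy Loc Ch)
      (T U : SumTy Loc Ch) (h : ∀ i, T i = none ∨ U i = none) :
      Typing Γ M (.arr r T) →
      Typing Γ M (.arr r (sumOver T U))

/-- Typing of memories: pointwise typing of the stacks by the stack types. -/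
def MemTyped (S : Mem Loc Ch) (r : MemTy Loc Ch) : Prop :=
  ∀ a, List.Forall₂ (fun M t => Typing [] M t) (S a) (r a)

/-- Typing of continuation stacks `⊢ K : !!s_I => !!t_J`. -/
inductive ContTyped : CStack Loc Ch → SumTy Loc Ch → SumTy Loc Ch → Prop where
  | nil (T : SumTy Loc Ch) : ContTyped [] T T
  | cons (i : Ch) (M : Tm Loc Ch) (r : MemTy Loc Ch) (S T : SumTy Loc Ch) (K : CStack Loc Ch) :
      Typing [] M (.arr r (sumOver S T)) → ContTyped K S T →
      ContTyped ((i, M) :: K) (Function.update S i (some r)) T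

/-- Typing of machine states `⊢ (S, M, K) : ε => !!t_J`. -/
def StateTyped (st : Mem Loc Ch × Tm Loc Ch × CStack Loc Ch) (T : SumTy Loc Ch) : Prop :=
  ∃ (r : MemTy Loc Ch) (S : SumTy Loc Ch),
    MemTyped st.1 r ∧ Typing [] st.2.1 (.arr r (sumOver S T)) ∧ ContTyped st.2.2 S T

/-! ### Auxiliary lemmas -/

lemma memApp_memCons (a : Loc) (q : Ty Loc Ch) (r s : MemTy Loc Ch) :
    memApp (memCons a q r) s = memCons a q (memApp r s) := by
  funext b
  by_cases h : b = a <;> simp [memApp, memCons, Function.update_apply, h]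

lemma memApp_update (a : Loc) (q : StackTy Loc Ch) (r s : MemTy Loc Ch) :
    memApp (Function.update r a q) s = Function.update (memApp r s) a (q ++ s a) := by
  funext b
  by_cases h : b = a <;> simp [memApp, Function.update_apply, h]

lemma sumExpand_update (q : MemTy Loc Ch) (U : SumTy Loc Ch) (i : Ch) (s : MemTy Loc Ch) :
    sumExpand q (Function.update U i (some s))
      = Function.update (sumExpand q U) i (some (memApp s q)) := by
  funext j
  by_cases h : j = i <;> simp [sumExpand, Function.update_apply, h]

lemma sumOver_update_left (S T : SumTy Loc Ch) (i : Ch) (s : MemTy Loc Ch) :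
    sumOver (Function.update S i (some s)) T = Function.update (sumOver S T) i (some s) := by
  funext j
  by_cases h : j = i <;> simp [sumOver, Function.update_apply, h]

lemma sumOver_update_none (U V : SumTy Loc Ch) (i : Ch) (s : MemTy Loc Ch) :
    sumOver (Function.update U i (some s)) (Function.update V i none)
      = sumOver (Function.update U i (some s)) V := by
  funext j
  by_cases h : j = i <;> simp [sumOver, Function.update_apply, h]

lemma typing_incl_update {Γ : List (Ty Loc Ch)} {M : Tm Loc Ch} {r : MemTy Loc Ch}
    {U V : SumTy Loc Ch} (h : ∀ j, U j = none ∨ V j = none) (i : Ch) (s : MemTy Loc Ch)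
    (ht : Typing Γ M (.arr r (Function.update U i (some s)))) :
    Typing Γ M (.arr r (Function.update (sumOver U V) i (some s))) := by
  rw [← sumOver_update_left, ← sumOver_update_none U V i s]
  refine Typing.incl _ _ _ _ _ (fun j => ?_) ht
  by_cases hj : j = i
  · subst hj; right; simp
  · simpa [Function.update_apply, hj] using h j

lemma typing_weaken {Γ : List (Ty Loc Ch)} {M : Tm Loc Ch} {t : Ty Loc Ch} (h : Typing Γ M t) :
    ∀ Γ₁ Γ₂ (s : Ty Loc Ch), Γ = Γ₁ ++ Γ₂ → Typing (Γ₁ ++ s :: Γ₂) (M.lift Γ₁.length) t := by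
  induction h with
  | var Γ n t hg =>
    intro Γ₁ Γ₂ s hΓ
    subst hΓ
    by_cases hn : n < Γ₁.length
    · rw [Tm.lift, if_pos hn]
      refine Typing.var _ _ _ ?_
      rw [List.getElem?_append_left hn] at hg ⊢
      exact hg
    · rw [Tm.lift, if_neg hn]
      have hle : Γ₁.length ≤ n := le_of_not_gt hn
      refine Typing.var _ _ _ ?_
      rw [List.getElem?_append_right (by omega : Γ₁.length ≤ n + 1)]
      rw [List.getElem?_append_right hle] at hg
      have he : n + 1 - Γ₁.length = (n - Γ₁.length) + 1 := by omega
      rw [he]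
      simpa using hg
  | choice Γ i =>
    intro Γ₁ Γ₂ s hΓ
    exact Typing.choice _ _
  | push Γ N r a M s T hN hM ihN ihM =>
    intro Γ₁ Γ₂ s' hΓ
    exact Typing.push _ _ _ _ _ _ _ (ihN _ _ _ hΓ) (ihM _ _ _ hΓ)
  | pop Γ r a M s T hM ih =>
    intro Γ₁ Γ₂ s' hΓ
    exact Typing.pop _ _ _ _ _ _ (ih (r :: Γ₁) Γ₂ s' (by rw [hΓ]; rfl))
  | caseOf Γ M N i r s T hM hN ihM ihN =>
    intro Γ₁ Γ₂ s' hΓ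
    exact Typing.caseOf _ _ _ _ _ _ _ (ihM _ _ _ hΓ) (ihN _ _ _ hΓ)
  | loop Γ M i s T hT hM ih =>
    intro Γ₁ Γ₂ s' hΓ
    exact Typing.loop _ _ _ _ _ hT (ih _ _ _ hΓ)
  | expand Γ M r s T hM ih =>
    intro Γ₁ Γ₂ s' hΓ
    exact Typing.expand _ _ _ _ _ (ih _ _ _ hΓ)
  | incl Γ M r T U hd hM ih =>
    intro Γ₁ Γ₂ s' hΓ
    exact Typing.incl _ _ _ _ _ hd (ih _ _ _ hΓ)

lemma typing_subst {Γ : List (Ty Loc Ch)} {M : Tm Loc Ch} {t : Ty Loc Ch} (h : Typing Γ M t) :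
    ∀ Γ₁ Γ₂ (r : Ty Loc Ch) (N : Tm Loc Ch), Γ = Γ₁ ++ r :: Γ₂ → Typing (Γ₁ ++ Γ₂) N r →
      Typing (Γ₁ ++ Γ₂) (M.subst Γ₁.length N) t := by
  induction h with
  | var Γ n t hg =>
    intro Γ₁ Γ₂ r N hΓ hN
    subst hΓ
    rcases lt_trichotomy n Γ₁.length with hn | hn | hn
    · rw [Tm.subst, if_neg (by omega), if_pos hn]
      refine Typing.var _ _ _ ?_
      rw [List.getElem?_append_left hn] at hg ⊢
      exact hg
    · rw [Tm.subst, if_pos hn]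
      have h2 : (Γ₁ ++ r :: Γ₂)[n]? = some r := by
        rw [List.getElem?_append_right (by omega)]
        simp [hn]
      rw [hg] at h2
      obtain rfl := Option.some.inj h2
      exact hN
    · rw [Tm.subst, if_neg (by omega), if_neg (by omega)]
      refine Typing.var _ _ _ ?_
      rw [List.getElem?_append_right (by omega : Γ₁.length ≤ n - 1)]
      rw [List.getElem?_append_right (by omega : Γ₁.length ≤ n)] at hg
      have he : n - Γ₁.length = (n - 1 - Γ₁.length) + 1 := by omega
      rw [he] at hg
      simpa using hg
  | choice Γ i =>
    intro Γ₁ Γ₂ r N hΓ hN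
    exact Typing.choice _ _
  | push Γ P q a M s T hP hM ihP ihM =>
    intro Γ₁ Γ₂ r N hΓ hN
    exact Typing.push _ _ _ _ _ _ _ (ihP _ _ _ _ hΓ hN) (ihM _ _ _ _ hΓ hN)
  | pop Γ q a M s T hM ih =>
    intro Γ₁ Γ₂ r N hΓ hN
    refine Typing.pop _ _ _ _ _ _ (ih (q :: Γ₁) Γ₂ r (N.lift 0) (by rw [hΓ]; rfl) ?_)
    exact typing_weaken hN [] (Γ₁ ++ Γ₂) q rfl
  | caseOf Γ M P i r' s T hM hP ihM ihP =>
    intro Γ₁ Γ₂ r N hΓ hN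
    exact Typing.caseOf _ _ _ _ _ _ _ (ihM _ _ _ _ hΓ hN) (ihP _ _ _ _ hΓ hN)
  | loop Γ M i s T hT hM ih =>
    intro Γ₁ Γ₂ r N hΓ hN
    exact Typing.loop _ _ _ _ _ hT (ih _ _ _ _ hΓ hN)
  | expand Γ M r' s T hM ih =>
    intro Γ₁ Γ₂ r N hΓ hN
    exact Typing.expand _ _ _ _ _ (ih _ _ _ _ hΓ hN)
  | incl Γ M r' T U hd hM ih =>
    intro Γ₁ Γ₂ r N hΓ hN
    exact Typing.incl _ _ _ _ _ hd (ih _ _ _ _ hΓ hN)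

/-! ### Inversion lemmas -/

lemma inv_push {Γ : List (Ty Loc Ch)} {P : Tm Loc Ch} {t : Ty Loc Ch} (h : Typing Γ P t) :
    ∀ N a M s U, P = Tm.push N a M → t = Ty.arr s U →
      ∃ r, Typing Γ N r ∧ Typing Γ M (.arr (memCons a r s) U) := by
  induction h with
  | var Γ n t hg => exact fun _ _ _ _ _ hP _ => nomatch hP
  | choice Γ i => exact fun _ _ _ _ _ hP _ => nomatch hP
  | push Γ N r a M s T hN hM _ _ =>
    intro N' a' M' s' U' hP ht
    cases hP; cases ht
    exact ⟨r, hN, hM⟩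
  | pop Γ r a M s T hM ih => exact fun _ _ _ _ _ hP _ => nomatch hP
  | caseOf Γ M N i r s T hM hN ihM ihN => exact fun _ _ _ _ _ hP _ => nomatch hP
  | loop Γ M i s T hT hM ih => exact fun _ _ _ _ _ hP _ => nomatch hP
  | expand Γ M r s T hM ih =>
    intro N' a' M' s' U' hP ht
    cases ht
    obtain ⟨q, hN, hM'⟩ := ih N' a' M' r T hP rfl
    refine ⟨q, hN, ?_⟩
    rw [← memApp_memCons]
    exact Typing.expand _ _ _ _ _ hM'
  | incl Γ M r T U hd hM ih =>
    intro N' a' M' s' U' hP ht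
    cases ht
    obtain ⟨q, hN, hM'⟩ := ih N' a' M' r T hP rfl
    exact ⟨q, hN, Typing.incl _ _ _ _ _ hd hM'⟩

lemma inv_pop {Γ : List (Ty Loc Ch)} {P : Tm Loc Ch} {t : Ty Loc Ch} (h : Typing Γ P t) :
    ∀ a M r U, P = Tm.pop a M → t = Ty.arr r U →
      ∃ q rest, r a = q :: rest ∧ Typing (q :: Γ) M (.arr (Function.update r a rest) U) := by
  induction h with
  | var Γ n t hg => exact fun _ _ _ _ hP _ => nomatch hP
  | choice Γ i => exact fun _ _ _ _ hP _ => nomatch hP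
  | push Γ N r a M s T hN hM _ _ => exact fun _ _ _ _ hP _ => nomatch hP
  | pop Γ r a M s T hM =>
    intro a' M' r' U' hP ht
    cases hP; cases ht
    refine ⟨r, s a, by simp [memCons], ?_⟩
    have he : Function.update (memCons a r s) a (s a) = s := by
      funext b
      by_cases hb : b = a <;> simp [memCons, Function.update_apply, hb]
    rw [he]
    exact hM
  | caseOf Γ M N i r s T hM hN ihM ihN => exact fun _ _ _ _ hP _ => nomatch hP
  | loop Γ M i s T hT hM ih => exact fun _ _ _ _ hP _ => nomatch hP
  | expand Γ M r s T hM ih =>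
    intro a' M' r' U' hP ht
    cases ht
    obtain ⟨q, rest, heq, hM'⟩ := ih a' M' r T hP rfl
    refine ⟨q, rest ++ s a', by simp [memApp, heq], ?_⟩
    rw [← memApp_update]
    exact Typing.expand _ _ _ _ _ hM'
  | incl Γ M r T U hd hM ih =>
    intro a' M' r' U' hP ht
    cases ht
    obtain ⟨q, rest, heq, hM'⟩ := ih a' M' r T hP rfl
    exact ⟨q, rest, heq, Typing.incl _ _ _ _ _ hd hM'⟩

lemma inv_choice {Γ : List (Ty Loc Ch)} {P : Tm Loc Ch} {t : Ty Loc Ch} (h : Typing Γ P t) :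
    ∀ i r U, P = Tm.choice i → t = Ty.arr r U → U i = some r := by
  induction h with
  | var Γ n t hg => exact fun _ _ _ hP _ => nomatch hP
  | choice Γ i =>
    intro i' r' U' hP ht
    cases hP; cases ht
    simp [sumSingle]
  | push Γ N r a M s T hN hM _ _ => exact fun _ _ _ hP _ => nomatch hP
  | pop Γ r a M s T hM ih => exact fun _ _ _ hP _ => nomatch hP
  | caseOf Γ M N i r s T hM hN ihM ihN => exact fun _ _ _ hP _ => nomatch hP
  | loop Γ M i s T hT hM ih => exact fun _ _ _ hP _ => nomatch hP
  | expand Γ M r s T hM ih =>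
    intro i' r' U' hP ht
    cases ht
    simp [sumExpand, ih i' r T hP rfl, memApp]
  | incl Γ M r T U hd hM ih =>
    intro i' r' U' hP ht
    cases ht
    simp [sumOver, ih i' r T hP rfl]

lemma typing_choice_of {Γ : List (Ty Loc Ch)} (i : Ch) (r : MemTy Loc Ch) (U : SumTy Loc Ch)
    (h : U i = some r) : Typing Γ (Tm.choice i) (.arr r U) := by
  have h1 : Typing Γ (Tm.choice i) (.arr (memApp memNil r) (sumExpand r (sumSingle i memNil))) :=
    Typing.expand _ _ _ _ _ (Typing.choice Γ i)
  have e1 : memApp memNil r = r := rfl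
  have e2 : sumExpand r (sumSingle i memNil) = sumSingle i r := by
    funext j
    by_cases hj : j = i
    · subst hj; simp [sumExpand, sumSingle]; exact e1
    · simp [sumExpand, sumSingle, hj]
  rw [e1, e2] at h1
  have h2 := Typing.incl Γ (Tm.choice i) r (sumSingle i r)
      (fun j => if j = i then none else U j) (fun j => ?_) h1
  · have e3 : sumOver (sumSingle i r) (fun j => if j = i then none else U j) = U := by
      funext j
      by_cases hj : j = i
      · subst hj; simp [sumOver, sumSingle, h]
      · simp [sumOver, sumSingle, hj]
    rwa [e3] at h2
  · by_cases hj : j = i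
    · right; simp [hj]
    · left; simp [sumSingle, hj]

lemma inv_case {Γ : List (Ty Loc Ch)} {P : Tm Loc Ch} {t : Ty Loc Ch} (h : Typing Γ P t) :
    ∀ M i N r U, P = Tm.caseOf M i N → t = Ty.arr r U →
      ∃ s, Typing Γ M (.arr r (Function.update U i (some s))) ∧ Typing Γ N (.arr s U) := by
  induction h with
  | var Γ n t hg => exact fun _ _ _ _ _ hP _ => nomatch hP
  | choice Γ i => exact fun _ _ _ _ _ hP _ => nomatch hP
  | push Γ N r a M s T hN hM _ _ => exact fun _ _ _ _ _ hP _ => nomatch hP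
  | pop Γ r a M s T hM ih => exact fun _ _ _ _ _ hP _ => nomatch hP
  | caseOf Γ M N i r s T hM hN ihM ihN =>
    intro M' i' N' r' U' hP ht
    cases hP; cases ht
    exact ⟨s, hM, hN⟩
  | loop Γ M i s T hT hM ih => exact fun _ _ _ _ _ hP _ => nomatch hP
  | expand Γ M r s T hM ih =>
    intro M' i' N' r' U' hP ht
    cases ht
    obtain ⟨q, hM', hN'⟩ := ih M' i' N' r T hP rfl
    refine ⟨memApp q s, ?_, Typing.expand _ _ _ _ _ hN'⟩
    have := Typing.expand _ _ _ s _ hM'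
    rwa [sumExpand_update] at this
  | incl Γ M r T U hd hM ih =>
    intro M' i' N' r' U' hP ht
    cases ht
    obtain ⟨q, hM', hN'⟩ := ih M' i' N' r T hP rfl
    exact ⟨q, typing_incl_update hd i' q hM', Typing.incl _ _ _ _ _ hd hN'⟩

lemma inv_loop {Γ : List (Ty Loc Ch)} {P : Tm Loc Ch} {t : Ty Loc Ch} (h : Typing Γ P t) :
    ∀ M i r U, P = Tm.loop M i → t = Ty.arr r U →
      Typing Γ M (.arr r (Function.update U i (some r))) := by
  induction h with
  | var Γ n t hg => exact fun _ _ _ _ hP _ => nomatch hP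
  | choice Γ i => exact fun _ _ _ _ hP _ => nomatch hP
  | push Γ N r a M s T hN hM _ _ => exact fun _ _ _ _ hP _ => nomatch hP
  | pop Γ r a M s T hM ih => exact fun _ _ _ _ hP _ => nomatch hP
  | caseOf Γ M N i r s T hM hN ihM ihN => exact fun _ _ _ _ hP _ => nomatch hP
  | loop Γ M i s T hT hM =>
    intro M' i' r' U' hP ht
    cases hP; cases ht
    exact hM
  | expand Γ M r s T hM ih =>
    intro M' i' r' U' hP ht
    cases ht
    have := Typing.expand _ _ _ s _ (ih M' i' r T hP rfl)
    rwa [sumExpand_update] at this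
  | incl Γ M r T U hd hM ih =>
    intro M' i' r' U' hP ht
    cases ht
    exact typing_incl_update hd i' r (ih M' i' r T hP rfl)

/-! ### Memory typing lemmas -/

lemma memTyped_push {S : Mem Loc Ch} {r : MemTy Loc Ch} (h : MemTyped S r)
    {N : Tm Loc Ch} {t : Ty Loc Ch} (hN : Typing [] N t) (a : Loc) :
    MemTyped (S.push a N) (memCons a t r) := by
  intro b
  by_cases hb : b = a
  · subst hb
    erw [Mem.push, memCons, Function.update_self, Function.update_self]
    exact List.Forall₂.cons hN (h b)
  · erw [Mem.push, memCons, Function.update_of_ne hb, Function.update_of_ne hb]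
    exact h b

lemma memTyped_push_inv {S : Mem Loc Ch} {a : Loc} {N : Tm Loc Ch} {r : MemTy Loc Ch}
    (h : MemTyped (S.push a N) r) :
    ∃ t rest, r a = t :: rest ∧ Typing [] N t ∧ MemTyped S (Function.update r a rest) := by
  have ha := h a
  erw [Mem.push, Function.update_self] at ha
  rcases List.forall₂_cons_left_iff.mp ha with ⟨t, rest, hN, hrest, heq⟩
  refine ⟨t, rest, heq, hN, fun b => ?_⟩
  by_cases hb : b = a
  · subst hb
    rw [Function.update_self]
    exact hrest
  · rw [Function.update_of_ne hb]
    have hb' := h b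
    erw [Mem.push, Function.update_of_ne hb] at hb'
    exact hb'

/-- Machine evaluation preserves types. -/
theorem machine_preserves_types (S S' : Mem Loc Ch) (M M' : Tm Loc Ch)
    (K K' : CStack Loc Ch) (T : SumTy Loc Ch)
    (hty : StateTyped (S, M, K) T) (h : MStep (S, M, K) (S', M', K')) :
    StateTyped (S', M', K') T := by
  obtain ⟨r, Sc, hmem, htm, hK⟩ := hty
  cases h with
  | push S₀ N a M₀ K₀ =>
    obtain ⟨q, hN, hM⟩ := inv_push htm N a M' r (sumOver Sc T) rfl rfl
    exact ⟨memCons a q r, Sc, memTyped_push hmem hN a, hM, hK⟩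
  | pop S₀ a N M₀ K₀ =>
    obtain ⟨t, rest, heq, hN, hS⟩ := memTyped_push_inv hmem
    obtain ⟨t', rest', heq', hM⟩ := inv_pop htm a M₀ r (sumOver Sc T) rfl rfl
    rw [heq] at heq'
    obtain ⟨rfl, rfl⟩ : t = t' ∧ rest = rest' :=
      ⟨(List.cons.injEq _ _ _ _ ▸ heq').1, (List.cons.injEq _ _ _ _ ▸ heq').2⟩
    refine ⟨Function.update r a rest, Sc, hS, ?_, hK⟩
    exact typing_subst hM [] [] t N rfl hN
  | select S₀ i M₀ K₀ =>
    cases hK with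
    | cons _ _ q Sc' _ _ hM hK' =>
      have hch := inv_choice htm i r (sumOver (Function.update Sc' i (some q)) T) rfl rfl
      rw [sumOver_update_left, Function.update_self] at hch
      obtain rfl := Option.some.inj hch
      exact ⟨q, Sc', hmem, hM, hK'⟩
  | reject S₀ i j M₀ K₀ hij =>
    cases hK with
    | cons _ _ q Sc' _ _ hM hK' =>
      have hch := inv_choice htm i r (sumOver (Function.update Sc' j (some q)) T) rfl rfl
      rw [sumOver_update_left, Function.update_of_ne hij] at hch
      exact ⟨r, Sc', hmem, typing_choice_of i r _ hch, hK'⟩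
  | caseOf S₀ N i M₀ K₀ =>
    obtain ⟨s, hN, hM⟩ := inv_case htm M' i M₀ r (sumOver Sc T) rfl rfl
    refine ⟨r, Function.update Sc i (some s), hmem, ?_, ContTyped.cons i M₀ s Sc T K hM hK⟩
    rwa [sumOver_update_left]
  | loop S₀ M₀ i K₀ =>
    have hM := inv_loop htm M' i r (sumOver Sc T) rfl rfl
    refine ⟨r, Function.update Sc i (some r), hmem, ?_,
      ContTyped.cons i (.loop M' i) r Sc T K htm hK⟩
    rwa [sumOver_update_left]
end
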